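/- Let p be a prime and let b : ℕ → ℤ_p be not identically zero with |b_j|_p → 0 as j → ∞. Set V = min_j v_p(b_j) and let j₀ be the largest index j with v_p(b_j) = V. Fix r ∈ ℕ and z ∈ ℤ_p, and for each j ∈ ℕ define c_j = p^{r j} · Σ_{i ≥ j} C(i, j) b_i z^{i−j} ∈ ℤ_p. Then the sequence (c_j) is not identically zero, |c_j|_p → 0, and the largest index j attaining min_j v_p(c_j) is at most j₀. -/

import Mathlib

open Filter

/-- The additive `p`-adic valuation on `ℚ_p`, with values in `WithTop ℤ` (`v_p 0 = ∞`). -/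
noncomputable def vP (p : ℕ) [Fact p.Prime] (x : ℚ_[p]) : WithTop ℤ :=
  Padic.addValuation x

lemma norm_le_of_vP_le' {p : ℕ} [hp : Fact p.Prime] {x y : ℚ_[p]}
    (h : vP p x ≤ vP p y) : ‖y‖ ≤ ‖x‖ := by
  rw [vP, vP] at h
  rcases eq_or_ne y 0 with rfl | hy
  · simp
  rcases eq_or_ne x 0 with rfl | hx
  · rw [AddValuation.map_zero, top_le_iff, Padic.addValuation.apply hy] at h
    exact absurd h (WithTop.coe_ne_top)
  rw [Padic.addValuation.apply hx, Padic.addValuation.apply hy, WithTop.coe_le_coe] at h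
  rw [Padic.norm_eq_zpow_neg_valuation hx, Padic.norm_eq_zpow_neg_valuation hy]
  have hp1 : (1:ℝ) < p := by exact_mod_cast hp.out.one_lt
  exact zpow_le_zpow_right₀ hp1.le (by omega)

lemma norm_le_div_p_of_vP_lt' {p : ℕ} [hp : Fact p.Prime] {x y : ℚ_[p]} (hx : x ≠ 0)
    (h : vP p x < vP p y) : ‖y‖ ≤ ‖x‖ / p := by
  rw [vP, vP] at h
  have hp1 : (1:ℝ) < p := by exact_mod_cast hp.out.one_lt
  have hp0 : (0:ℝ) < p := lt_trans one_pos hp1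
  rcases eq_or_ne y 0 with rfl | hy
  · rw [norm_zero]
    positivity
  rw [Padic.addValuation.apply hx, Padic.addValuation.apply hy, WithTop.coe_lt_coe] at h
  rw [Padic.norm_eq_zpow_neg_valuation hx, Padic.norm_eq_zpow_neg_valuation hy, div_eq_mul_inv,
    ← zpow_neg_one, ← zpow_add₀ (ne_of_gt hp0)]
  exact zpow_le_zpow_right₀ hp1.le (by omega)

/-- Let `b : ℕ → ℤ_p` be not identically zero with `|b_j|_p → 0`,
`V = min_j v_p(b_j)` attained last at `j₀`.  Fix `r ∈ ℕ` and `z ∈ ℤ_p`, and let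
`c_j = p^{r j} ∑_{i ≥ j} C(i,j) b_i z^{i−j}`.  Then `c` is not identically zero,
`|c_j|_p → 0`, and the largest index attaining `min_j v_p(c_j)` is at most `j₀`. -/
theorem substituted_series_min_index_le (p : ℕ) [hp : Fact p.Prime]
    (b : ℕ → ℤ_[p]) (hb_ne : ∃ j, b j ≠ 0)
    (hb : Tendsto (fun j => ‖b j‖) atTop (nhds 0))
    (j₀ : ℕ) (hj₀min : ∀ j : ℕ, vP p (b j₀ : ℚ_[p]) ≤ vP p (b j : ℚ_[p]))
    (hj₀max : ∀ j : ℕ, j₀ < j → vP p (b j₀ : ℚ_[p]) < vP p (b j : ℚ_[p]))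
    (r : ℕ) (z : ℤ_[p]) (c : ℕ → ℤ_[p])
    (hc : ∀ j : ℕ, c j = (p : ℤ_[p]) ^ (r * j) *
      ∑' i : ℕ, ((j + i).choose j : ℤ_[p]) * b (j + i) * z ^ i) :
    (∃ j, c j ≠ 0) ∧
    Tendsto (fun j => ‖c j‖) atTop (nhds 0) ∧
    ∀ j : ℕ, (∀ i : ℕ, vP p (c j : ℚ_[p]) ≤ vP p (c i : ℚ_[p])) → j ≤ j₀ := by
  have hp1 : (1:ℝ) < p := by exact_mod_cast hp.out.one_lt
  have hp0 : (0:ℝ) < p := lt_trans one_pos hp1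
  -- norm facts for b
  have hble : ∀ j : ℕ, ‖b j‖ ≤ ‖b j₀‖ := by
    intro j
    have h2 := norm_le_of_vP_le' (hj₀min j)
    rw [PadicInt.norm_def, PadicInt.norm_def]
    exact h2
  have hbj₀ : b j₀ ≠ 0 := by
    obtain ⟨j, hj⟩ := hb_ne
    intro h0
    have := hble j
    rw [h0, norm_zero] at this
    exact hj (norm_le_zero_iff.mp this)
  have hbj₀' : (b j₀ : ℚ_[p]) ≠ 0 := fun h => hbj₀ (PadicInt.coe_eq_zero.mp h)
  have hK : 0 < ‖b j₀‖ := norm_pos_iff.mpr hbj₀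
  have htail : ∀ k : ℕ, j₀ < k → ‖b k‖ ≤ ‖b j₀‖ / p := by
    intro k hk
    have h2 := norm_le_div_p_of_vP_lt' hbj₀' (hj₀max k hk)
    rw [PadicInt.norm_def, PadicInt.norm_def]
    exact h2
  -- term norm bound
  have hfle : ∀ j i : ℕ, ‖((j + i).choose j : ℤ_[p]) * b (j + i) * z ^ i‖ ≤ ‖b (j + i)‖ := by
    intro j i
    rw [norm_mul, norm_mul]
    calc ‖((j + i).choose j : ℤ_[p])‖ * ‖b (j + i)‖ * ‖z ^ i‖
        ≤ 1 * ‖b (j + i)‖ * 1 := by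
          apply mul_le_mul
          · exact mul_le_mul_of_nonneg_right (PadicInt.norm_le_one _) (norm_nonneg _)
          · exact PadicInt.norm_le_one _
          · exact norm_nonneg _
          · positivity
      _ = ‖b (j + i)‖ := by ring
  -- summability
  have hbshift : ∀ j : ℕ, Tendsto (fun i => ‖b (j + i)‖) atTop (nhds 0) := by
    intro j
    have := hb.comp (tendsto_add_atTop_nat j)
    simpa [Function.comp_def, add_comm] using this
  have hsum : ∀ j : ℕ, Summable (fun i => ((j + i).choose j : ℤ_[p]) * b (j + i) * z ^ i) := by
    intro j
    apply NonarchimedeanAddGroup.summable_of_tendsto_cofinite_zero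
    rw [Nat.cofinite_eq_atTop, tendsto_zero_iff_norm_tendsto_zero]
    exact squeeze_zero (fun i => norm_nonneg _) (hfle j) (hbshift j)
  -- tsum norm bound
  have hSle : ∀ (j : ℕ) (C : ℝ), 0 ≤ C → (∀ k : ℕ, j ≤ k → ‖b k‖ ≤ C) →
      ‖∑' i : ℕ, ((j + i).choose j : ℤ_[p]) * b (j + i) * z ^ i‖ ≤ C := by
    intro j C hC hbd
    exact IsUltrametricDist.norm_tsum_le_of_forall_le_of_nonneg hC
      (fun i => (hfle j i).trans (hbd _ (Nat.le_add_right j i)))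
  -- norm of c j₀
  have hcj₀ : ‖c j₀‖ = (p:ℝ) ^ (-(r * j₀ : ℕ) : ℤ) * ‖b j₀‖ := by
    rw [hc j₀, norm_mul, PadicInt.norm_p_pow]
    congr 1
    rw [Summable.tsum_eq_zero_add (hsum j₀)]
    have h0 : ((j₀ + 0).choose j₀ : ℤ_[p]) * b (j₀ + 0) * z ^ 0 = b j₀ := by simp
    rw [h0]
    have hKp : ‖b j₀‖ / p < ‖b j₀‖ := by
      rw [div_lt_iff₀ hp0]
      nlinarith
    have htail' :
        ‖∑' i : ℕ, ((j₀ + (i+1)).choose j₀ : ℤ_[p]) * b (j₀ + (i+1)) * z ^ (i+1)‖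
          ≤ ‖b j₀‖ / p :=
      IsUltrametricDist.norm_tsum_le_of_forall_le_of_nonneg (by positivity)
        (fun i => (hfle j₀ (i+1)).trans (htail _ (by omega)))
    rw [IsUltrametricDist.norm_add_eq_max_of_norm_ne_norm
      (by exact ne_of_gt (lt_of_le_of_lt htail' hKp))]
    exact max_eq_left (le_trans htail' hKp.le)
  have hcj₀pos : 0 < ‖c j₀‖ := by
    rw [hcj₀]
    positivity
  -- norms of c j for j > j₀
  have hclt : ∀ j : ℕ, j₀ < j → ‖c j‖ < ‖c j₀‖ := by
    intro j hj
    rw [hc j, norm_mul, PadicInt.norm_p_pow, hcj₀]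
    have h1 : ‖∑' i : ℕ, ((j + i).choose j : ℤ_[p]) * b (j + i) * z ^ i‖ ≤ ‖b j₀‖ / p :=
      hSle j _ (by positivity) (fun k hk => htail k (lt_of_lt_of_le hj hk))
    calc (p:ℝ) ^ (-(r * j : ℕ) : ℤ) * ‖∑' i : ℕ, ((j + i).choose j : ℤ_[p]) * b (j + i) * z ^ i‖
        ≤ (p:ℝ) ^ (-(r * j₀ : ℕ) : ℤ) * (‖b j₀‖ / p) := by
          apply mul_le_mul _ h1 (norm_nonneg _) (by positivity)
          apply zpow_le_zpow_right₀ hp1.le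
          have : r * j₀ ≤ r * j := Nat.mul_le_mul_left r hj.le
          omega
      _ < (p:ℝ) ^ (-(r * j₀ : ℕ) : ℤ) * ‖b j₀‖ := by
          apply mul_lt_mul_of_pos_left _ (by positivity)
          rw [div_lt_iff₀ hp0]
          nlinarith
  refine ⟨⟨j₀, fun h => by rw [h, norm_zero] at hcj₀pos; exact lt_irrefl _ hcj₀pos⟩, ?_, ?_⟩
  · -- tendsto
    rw [Metric.tendsto_atTop]
    intro ε hε
    obtain ⟨N, hN⟩ := (Metric.tendsto_atTop.mp hb) (ε/2) (by positivity)
    refine ⟨N, fun j hj => ?_⟩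
    have hbnd : ∀ k : ℕ, j ≤ k → ‖b k‖ ≤ ε/2 := by
      intro k hk
      have := hN k (le_trans hj hk)
      rw [Real.dist_eq, sub_zero, abs_of_nonneg (norm_nonneg _)] at this
      exact this.le
    have : ‖c j‖ ≤ ε/2 := by
      rw [hc j]
      calc ‖(p : ℤ_[p]) ^ (r * j) * ∑' i : ℕ, ((j + i).choose j : ℤ_[p]) * b (j + i) * z ^ i‖
          ≤ ‖(p : ℤ_[p]) ^ (r * j)‖ * ‖∑' i : ℕ, ((j + i).choose j : ℤ_[p]) * b (j + i) * z ^ i‖ :=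
            norm_mul_le _ _
        _ ≤ 1 * (ε/2) := by
            apply mul_le_mul (PadicInt.norm_le_one _) (hSle j _ (by positivity) hbnd)
              (norm_nonneg _) zero_le_one
        _ = ε/2 := one_mul _
    rw [Real.dist_eq, sub_zero, abs_of_nonneg (norm_nonneg _)]
    linarith
  · -- max index ≤ j₀
    intro j hminj
    by_contra hcon
    push_neg at hcon
    have h1 : ‖c j₀‖ ≤ ‖c j‖ := by
      have h2 := norm_le_of_vP_le' (hminj j₀)
      rw [PadicInt.norm_def, PadicInt.norm_def]
      exact h2
    exact absurd h1 (not_le.mpr (hclt j hcon))
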